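/- Any two quasinilpotent elements a, b of a complex unital Banach algebra are quasinilpotent equivalent, i.e. ρ(a,b) = 0 and ρ(b,a) = 0. -/

import Mathlib

/-- The iterated commutator `C_{a,b}^n` applied to `1`, where `C_{a,b}(x) = a*x - x*b`. -/
noncomputable def citer {A : Type*} [Ring A] (a b : A) (n : ℕ) : A :=
  (fun x => a * x - x * b)^[n] 1

/-- `ρ(a,b) = limsup_n ‖C_{a,b}^n(1)‖^{1/n}`. -/
noncomputable def rho {A : Type*} [NormedRing A] (a b : A) : ℝ :=
  Filter.limsup (fun n : ℕ => ‖citer a b n‖ ^ ((n : ℝ)⁻¹)) Filter.atTop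

open Finset Filter LinearMap

private lemma citer_eq_pow {A : Type*} [NormedRing A] [NormedAlgebra ℂ A] (a b : A) (n : ℕ) :
    citer a b n = ((mulLeft ℂ a - mulRight ℂ b) ^ n) 1 := by
  induction n with
  | zero => simp [citer]
  | succ n ih =>
      rw [citer, Function.iterate_succ_apply', ← citer, ih, pow_succ',
        Module.End.mul_apply, LinearMap.sub_apply, mulLeft_apply, mulRight_apply]

private lemma citer_norm_le {A : Type*} [NormedRing A] [NormedAlgebra ℂ A] (a b : A) (n : ℕ) :
    ‖citer a b n‖ ≤ ∑ m ∈ range (n + 1), (n.choose m : ℝ) * (‖a ^ m‖ * ‖b ^ (n - m)‖) := by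
  rw [citer_eq_pow, sub_eq_add_neg, (commute_mulLeft_right (R := ℂ) a b).neg_right.add_pow,
    LinearMap.sum_apply]
  refine (norm_sum_le _ _).trans (Finset.sum_le_sum fun m hm => ?_)
  have e1 : ((-mulRight ℂ b) ^ (n - m)) = (-1 : Module.End ℂ A) ^ (n - m) * mulRight ℂ b ^ (n-m) := by
    rw [neg_pow]
  rw [Module.End.mul_apply, Module.End.mul_apply, Module.End.natCast_apply, e1,
    Module.End.mul_apply, pow_mulLeft, pow_mulRight, map_nsmul, mulRight_apply, one_mul]
  have e2 : ‖((-1 : Module.End ℂ A) ^ (n - m)) (n.choose m • b ^ (n - m))‖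
      = ‖n.choose m • b ^ (n - m)‖ := by
    rcases Nat.even_or_odd (n - m) with he | ho
    · rw [he.neg_one_pow]; simp
    · rw [ho.neg_one_pow]; simp
  calc ‖(mulLeft ℂ (a ^ m)) (((-1 : Module.End ℂ A) ^ (n - m)) (n.choose m • b ^ (n - m)))‖
      ≤ ‖a ^ m‖ * ‖((-1 : Module.End ℂ A) ^ (n - m)) (n.choose m • b ^ (n - m))‖ := by
        rw [mulLeft_apply]; exact norm_mul_le _ _
    _ = ‖a ^ m‖ * ‖n.choose m • b ^ (n - m)‖ := by rw [e2]
    _ ≤ ‖a ^ m‖ * ((n.choose m : ℝ) * ‖b ^ (n - m)‖) := by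
        gcongr; exact norm_nsmul_le
    _ = (n.choose m : ℝ) * (‖a ^ m‖ * ‖b ^ (n - m)‖) := by ring

private lemma gelfand_zero {A : Type*} [NormedRing A] [NormedAlgebra ℂ A] [CompleteSpace A]
    (a : A) (ha : spectralRadius ℂ a = 0) :
    Filter.Tendsto (fun n : ℕ => ‖a ^ n‖ ^ (1 / n : ℝ)) atTop (nhds 0) := by
  have h := spectrum.pow_norm_pow_one_div_tendsto_nhds_spectralRadius a
  rw [ha] at h
  have h2 := (ENNReal.tendsto_toReal (by simp)).comp h
  have h3 : (ENNReal.toReal ∘ fun n : ℕ => ENNReal.ofReal (‖a ^ n‖ ^ (1 / n : ℝ)))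
      = fun n : ℕ => ‖a ^ n‖ ^ (1 / n : ℝ) := by
    funext n
    simp [Function.comp, ENNReal.toReal_ofReal (Real.rpow_nonneg (norm_nonneg _) _)]
  rwa [h3, ENNReal.toReal_zero] at h2

private lemma exists_bound {A : Type*} [NormedRing A] (a : A) {δ : ℝ} (hδ : 0 < δ)
    (h : Filter.Tendsto (fun n : ℕ => ‖a ^ n‖ ^ (1 / n : ℝ)) atTop (nhds 0)) :
    ∃ M : ℝ, 1 ≤ M ∧ ∀ m : ℕ, ‖a ^ m‖ ≤ M * δ ^ m := by
  obtain ⟨N, hN⟩ := (Metric.tendsto_atTop.mp h δ hδ)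
  set K := max N 1 with hK
  refine ⟨1 + ∑ m ∈ range K, ‖a ^ m‖ / δ ^ m,
    le_add_of_nonneg_right (Finset.sum_nonneg fun j _ => by positivity), fun m => ?_⟩
  rcases lt_or_ge m K with hm | hm
  · have h1 : ‖a ^ m‖ / δ ^ m ≤ ∑ j ∈ range K, ‖a ^ j‖ / δ ^ j :=
      Finset.single_le_sum (f := fun j => ‖a ^ j‖ / δ ^ j)
        (fun j _ => by positivity) (Finset.mem_range.mpr hm)
    have h2 : ‖a ^ m‖ / δ ^ m ≤ 1 + ∑ j ∈ range K, ‖a ^ j‖ / δ ^ j := by linarith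
    rw [div_le_iff₀ (by positivity)] at h2
    linarith
  · have hm1 : (1 : ℕ) ≤ m := le_trans (le_max_right N 1) hm
    have hmN : N ≤ m := le_trans (le_max_left N 1) hm
    have hlt := hN m hmN
    rw [Real.dist_eq, sub_zero, abs_of_nonneg (Real.rpow_nonneg (norm_nonneg _) _)] at hlt
    have hmne : (m : ℝ) ≠ 0 := Nat.cast_ne_zero.mpr (by omega)
    have key : ‖a ^ m‖ = (‖a ^ m‖ ^ (1 / m : ℝ)) ^ m := by
      rw [← Real.rpow_natCast (‖a ^ m‖ ^ (1 / m : ℝ)) m, ← Real.rpow_mul (norm_nonneg _),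
        one_div, inv_mul_cancel₀ hmne, Real.rpow_one]
    have hd : ‖a ^ m‖ ≤ δ ^ m := by
      rw [key]
      exact pow_le_pow_left₀ (Real.rpow_nonneg (norm_nonneg _) _) hlt.le m
    calc ‖a ^ m‖ ≤ δ ^ m := hd
      _ ≤ (1 + ∑ j ∈ range K, ‖a ^ j‖ / δ ^ j) * δ ^ m := by
          nlinarith [Finset.sum_nonneg (fun j (_ : j ∈ range K) => by positivity :
            ∀ j ∈ range K, 0 ≤ ‖a ^ j‖ / δ ^ j), pow_pos hδ m]

private lemma rho_eq_zero {A : Type*} [NormedRing A] [NormedAlgebra ℂ A] [CompleteSpace A]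
    (a b : A) (ha : spectralRadius ℂ a = 0) (hb : spectralRadius ℂ b = 0) :
    rho a b = 0 := by
  have htend : Filter.Tendsto (fun n : ℕ => ‖citer a b n‖ ^ ((n : ℝ)⁻¹)) atTop (nhds 0) := by
    rw [NormedAddCommGroup.tendsto_nhds_zero]
    intro ε hε
    set δ : ℝ := ε / 8 with hδdef
    have hδ : 0 < δ := by positivity
    obtain ⟨Ma, hMa1, hMa⟩ := exists_bound a hδ (gelfand_zero a ha)
    obtain ⟨Mb, hMb1, hMb⟩ := exists_bound b hδ (gelfand_zero b hb)
    have hMab : (1 : ℝ) ≤ Ma * Mb := one_le_mul_of_one_le_of_one_le hMa1 hMb1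
    have hbound : ∀ n : ℕ, ‖citer a b n‖ ≤ Ma * Mb * (2 * δ) ^ n := by
      intro n
      refine (citer_norm_le a b n).trans ?_
      have : ∑ m ∈ range (n + 1), (n.choose m : ℝ) * (‖a ^ m‖ * ‖b ^ (n - m)‖)
          ≤ ∑ m ∈ range (n + 1), δ ^ m * δ ^ (n - m) * (n.choose m : ℝ) * (Ma * Mb) := by
        refine Finset.sum_le_sum fun m hm => ?_
        have h1 := hMa m
        have h2 := hMb (n - m)
        have hna : 0 ≤ ‖a ^ m‖ := norm_nonneg _
        have hnb : 0 ≤ ‖b ^ (n - m)‖ := norm_nonneg _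
        have hc : (0:ℝ) ≤ (n.choose m : ℝ) := Nat.cast_nonneg _
        nlinarith [pow_pos hδ m, pow_pos hδ (n - m), mul_nonneg hna hnb,
          mul_le_mul h1 h2 hnb (by nlinarith [pow_pos hδ m])]
      refine this.trans_eq ?_
      rw [← Finset.sum_mul]
      have := add_pow δ δ n
      have h2d : (2 * δ) ^ n = ∑ m ∈ range (n + 1), δ ^ m * δ ^ (n - m) * (n.choose m : ℝ) := by
        rw [two_mul, add_pow]
      rw [h2d]; ring
    have h2n : ∀ᶠ n : ℕ in atTop, Ma * Mb ≤ 2 ^ n :=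
      (tendsto_pow_atTop_atTop_of_one_lt (one_lt_two)).eventually_ge_atTop (Ma * Mb)
    filter_upwards [eventually_ge_atTop 1, h2n] with n hn1 hn2
    have hnne : (n : ℝ) ≠ 0 := Nat.cast_ne_zero.mpr (by omega)
    have hf0 : (0:ℝ) ≤ ‖citer a b n‖ ^ ((n : ℝ)⁻¹) := Real.rpow_nonneg (norm_nonneg _) _
    rw [Real.norm_eq_abs, abs_of_nonneg hf0]
    have step1 : ‖citer a b n‖ ^ ((n : ℝ)⁻¹) ≤ (Ma * Mb * (2 * δ) ^ n) ^ ((n : ℝ)⁻¹) :=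
      Real.rpow_le_rpow (norm_nonneg _) (hbound n) (by positivity)
    have step2 : (Ma * Mb * (2 * δ) ^ n) ^ ((n : ℝ)⁻¹) ≤ ((2 * (2 * δ)) ^ n) ^ ((n : ℝ)⁻¹) := by
      refine Real.rpow_le_rpow (by positivity) ?_ (by positivity)
      have hmp : (2 * (2 * δ)) ^ n = 2 ^ n * (2 * δ) ^ n := mul_pow _ _ _
      rw [hmp]
      exact mul_le_mul_of_nonneg_right hn2 (by positivity)
    have step3 : ((2 * (2 * δ)) ^ n) ^ ((n : ℝ)⁻¹) = 2 * (2 * δ) := by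
      rw [← Real.rpow_natCast (2 * (2 * δ)) n, ← Real.rpow_mul (by positivity),
        mul_inv_cancel₀ hnne, Real.rpow_one]
    have : ‖citer a b n‖ ^ ((n : ℝ)⁻¹) ≤ 2 * (2 * δ) := by
      calc _ ≤ _ := step1
        _ ≤ _ := step2
        _ = _ := step3
    have : 2 * (2 * δ) < ε := by rw [hδdef]; linarith
    linarith [step1.trans (step2.trans_eq step3)]
  exact htend.limsup_eq

/-- Any two quasinilpotent elements are quasinilpotent equivalent. -/
theorem stmt_3 {A : Type*} [NormedRing A] [NormedAlgebra ℂ A] [CompleteSpace A]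
    (a b : A) (ha : spectralRadius ℂ a = 0) (hb : spectralRadius ℂ b = 0) :
    rho a b = 0 ∧ rho b a = 0 :=
  ⟨rho_eq_zero a b ha hb, rho_eq_zero b a hb ha⟩
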